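/- arXiv:2112.05371 — 2 statements merged into one kernel-verified Lean document; each statement's English description precedes it below -/
import Mathlib

section
/- If T is a supercyclic bounded operator on a complex Banach space and α > 0, then the operator S = (α + ‖T‖)⁻¹ · T is supercyclic but satisfies ‖S‖ < 1, hence S is not convex-cyclic. -/
theorem stmt_12 {X : Type*} [NormedAddCommGroup X] [NormedSpace ℂ X] [Nontrivial X]
    (T : X →L[ℂ] X) (f : X)
    (hsc : Dense {x : X | ∃ (c : ℂ) (n : ℕ), x = c • (T ^ n) f})
    (α : ℝ) (hα : 0 < α)
    (S : X →L[ℂ] X) (hS : S = (((α + ‖T‖ : ℝ) : ℂ))⁻¹ • T) :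
    Dense {x : X | ∃ (c : ℂ) (n : ℕ), x = c • (S ^ n) f} ∧ ‖S‖ < 1 ∧
      ¬ ∃ g : X, Dense (convexHull ℝ (Set.range fun n : ℕ => (S ^ n) g)) := by
  have hβR : (0:ℝ) < α + ‖T‖ := by positivity
  set β : ℂ := ((α + ‖T‖ : ℝ) : ℂ) with hβ
  have hβ0 : β ≠ 0 := by
    simp only [hβ, Ne, Complex.ofReal_eq_zero]
    exact hβR.ne'
  have hpow : ∀ n : ℕ, (S ^ n : X →L[ℂ] X) = (β⁻¹)^n • (T ^ n) := by
    intro n; rw [hS, smul_pow]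
  have hseteq : {x : X | ∃ (c : ℂ) (n : ℕ), x = c • (S ^ n) f} =
      {x : X | ∃ (c : ℂ) (n : ℕ), x = c • (T ^ n) f} := by
    ext x
    constructor
    · rintro ⟨c, n, rfl⟩
      refine ⟨c * (β⁻¹)^n, n, ?_⟩
      rw [hpow]
      simp [smul_smul]
    · rintro ⟨c, n, rfl⟩
      refine ⟨c * β^n, n, ?_⟩
      rw [hpow]
      simp only [ContinuousLinearMap.smul_apply, smul_smul, inv_pow]
      rw [mul_assoc, mul_inv_cancel₀ (pow_ne_zero n hβ0), mul_one]
  have hnormS : ‖S‖ < 1 := by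
    have h1 : ‖S‖ = ‖β⁻¹‖ * ‖T‖ := by rw [hS, norm_smul β⁻¹ T]
    have h2 : ‖β⁻¹‖ = (α + ‖T‖)⁻¹ := by
      rw [norm_inv, hβ, Complex.norm_real, Real.norm_of_nonneg hβR.le]
    rw [h1, h2, inv_mul_lt_iff₀ hβR, mul_one]
    linarith
  refine ⟨hseteq ▸ hsc, hnormS, ?_⟩
  rintro ⟨g, hg⟩
  have hsub : convexHull ℝ (Set.range fun n : ℕ => (S ^ n) g) ⊆
      Metric.closedBall (0:X) ‖g‖ := by
    apply convexHull_min _ (convex_closedBall _ _)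
    rintro x ⟨n, rfl⟩
    simp only [Metric.mem_closedBall, dist_zero_right]
    calc ‖(S ^ n) g‖ ≤ ‖S ^ n‖ * ‖g‖ := (S ^ n).le_opNorm g
      _ ≤ ‖S‖ ^ n * ‖g‖ := by
          gcongr; exact norm_pow_le S n
      _ ≤ 1 * ‖g‖ := by
          gcongr
          exact pow_le_one₀ (norm_nonneg S) hnormS.le
      _ = ‖g‖ := one_mul _
  obtain ⟨x, hx⟩ := NormedSpace.exists_lt_norm ℂ X ‖g‖
  have hxcl : x ∈ closure (convexHull ℝ (Set.range fun n : ℕ => (S ^ n) g)) :=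
    hg x
  have := (Metric.isClosed_closedBall.closure_subset_iff.mpr hsub) hxcl
  simp only [Metric.mem_closedBall, dist_zero_right] at this
  linarith
end

section
/- Let T be a bounded linear operator on a complex Hilbert space, λ an eigenvalue of the adjoint T*. If T is convex-cyclic then the conjugate λ̄ lies in ℂ \ (closed unit disk ∪ ℝ); i.e., |λ| > 1 and Im(λ) ≠ 0. -/
theorem stmt_13 {H : Type*} [NormedAddCommGroup H] [InnerProductSpace ℂ H] [CompleteSpace H]
    (T : H →L[ℂ] H) (lam : ℂ)
    (heig : ∃ v : H, v ≠ 0 ∧ (ContinuousLinearMap.adjoint T) v = lam • v)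
    (hcc : ∃ f : H, Dense (convexHull ℝ (Set.range fun n : ℕ => (T ^ n) f))) :
    1 < ‖starRingEnd ℂ lam‖ ∧ (starRingEnd ℂ lam).im ≠ 0 := by
  obtain ⟨v, hv0, hvT⟩ := heig
  obtain ⟨f, hf⟩ := hcc
  set μ : ℂ := starRingEnd ℂ lam with hμ
  set c : ℂ := inner ℂ v f with hc
  -- adjoint powers
  have hpow : ∀ n : ℕ, ((ContinuousLinearMap.adjoint T) ^ n) v = lam ^ n • v := by
    intro n
    induction n with
    | zero => simp
    | succ n ih =>
      rw [pow_succ', pow_succ']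
      simp [ih, map_smul, hvT, smul_smul, mul_comm]
  -- key computation
  have hkey : ∀ n : ℕ, (inner ℂ v ((T ^ n) f) : ℂ) = μ ^ n * c := by
    intro n
    have h1 : (inner ℂ v ((T ^ n) f) : ℂ) = inner ℂ ((ContinuousLinearMap.adjoint (T ^ n)) v) f := by
      rw [ContinuousLinearMap.adjoint_inner_left]
    have h2 : ContinuousLinearMap.adjoint (T ^ n) = (ContinuousLinearMap.adjoint T) ^ n := by
      rw [← ContinuousLinearMap.star_eq_adjoint, ← ContinuousLinearMap.star_eq_adjoint, star_pow]
    rw [h1, h2, hpow, inner_smul_left, hc, hμ, map_pow]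
  -- the functional
  set Φ : H →L[ℂ] ℂ := innerSL ℂ v with hΦ
  have hΦsurj : Function.Surjective Φ := by
    intro z
    refine ⟨(z / ((‖v‖ : ℂ) ^ 2)) • v, ?_⟩
    have hvn : ((‖v‖ : ℂ) ^ 2) ≠ 0 := by
      exact_mod_cast pow_ne_zero 2 (norm_ne_zero_iff.2 hv0)
    simp only [hΦ, innerSL_apply_apply, inner_smul_right]
    rw [inner_self_eq_norm_sq_to_K]
    field_simp
    exact mul_div_cancel_right₀ z hvn
  have hΦdr : DenseRange Φ := hΦsurj.denseRange
  have hdense : Dense (Φ '' (convexHull ℝ (Set.range fun n : ℕ => (T ^ n) f))) :=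
    hΦdr.dense_image Φ.continuous hf
  have himg : Φ '' (convexHull ℝ (Set.range fun n : ℕ => (T ^ n) f))
      = convexHull ℝ (Set.range fun n : ℕ => μ ^ n * c) := by
    have hlin : IsLinearMap ℝ (⇑Φ) := ⟨Φ.map_add, fun r x => Φ.map_smul_of_tower r x⟩
    rw [hlin.image_convexHull, ← Set.range_comp]
    have hfun : (⇑Φ ∘ fun n : ℕ => (T ^ n) f) = fun n : ℕ => μ ^ n * c :=
      funext fun n => by simpa [hΦ] using hkey n
    rw [hfun]
  rw [himg] at hdense
  -- c ≠ 0
  have hcne : c ≠ 0 := by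
    intro h
    have hsub : (Set.range fun n : ℕ => μ ^ n * c) ⊆ {(0 : ℂ)} := by
      rintro x ⟨n, rfl⟩; simp [h]
    have : convexHull ℝ (Set.range fun n : ℕ => μ ^ n * c) ⊆ {(0 : ℂ)} :=
      convexHull_min hsub (convex_singleton 0)
    have h1 : (1 : ℂ) ∈ closure (convexHull ℝ (Set.range fun n : ℕ => μ ^ n * c)) := hdense 1
    have := (isClosed_singleton.closure_subset_iff.2 this) h1
    simp at this
  constructor
  · -- |μ| > 1
    by_contra hle
    push_neg at hle
    have hsub : (Set.range fun n : ℕ => μ ^ n * c) ⊆ Metric.closedBall (0 : ℂ) ‖c‖ := by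
      rintro x ⟨n, rfl⟩
      simp only [Metric.mem_closedBall, dist_zero_right]
      rw [norm_mul, norm_pow]
      calc ‖μ‖ ^ n * ‖c‖ ≤ 1 ^ n * ‖c‖ := by
            gcongr
        _ = ‖c‖ := by ring
    have hball : convexHull ℝ (Set.range fun n : ℕ => μ ^ n * c)
        ⊆ Metric.closedBall (0 : ℂ) ‖c‖ :=
      convexHull_min hsub (convex_closedBall _ _)
    have hcl := Metric.isClosed_closedBall.closure_subset_iff.2 hball
    have hx : ((‖c‖ + 1 : ℝ) : ℂ) ∈ Metric.closedBall (0 : ℂ) ‖c‖ :=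
      hcl (hdense _)
    simp only [Metric.mem_closedBall, dist_zero_right, Complex.norm_real] at hx
    have : (0 : ℝ) ≤ ‖c‖ := norm_nonneg _
    rw [Real.norm_eq_abs, abs_of_nonneg (by linarith)] at hx
    linarith
  · -- im ≠ 0
    intro him
    -- μ is real
    obtain ⟨r, hr⟩ : ∃ r : ℝ, μ = (r : ℂ) := ⟨μ.re, by apply Complex.ext <;> simp [him]⟩
    set K : Set ℂ := {x : ℂ | ((starRingEnd ℂ c) * x).im = 0} with hK
    have hKconvex : Convex ℝ K := by
      intro x hx y hy a b _ _ _
      simp only [hK, Set.mem_setOf_eq] at hx hy ⊢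
      have : (starRingEnd ℂ c) * (a • x + b • y)
          = a • ((starRingEnd ℂ c) * x) + b • ((starRingEnd ℂ c) * y) := by
        simp only [Complex.real_smul]; ring
      rw [this]
      simp [Complex.add_im, Complex.smul_im, hx, hy]
    have hKclosed : IsClosed K := by
      have : Continuous fun x : ℂ => ((starRingEnd ℂ c) * x).im :=
        Complex.continuous_im.comp (continuous_const.mul continuous_id)
      exact isClosed_eq this continuous_const
    have hsub : (Set.range fun n : ℕ => μ ^ n * c) ⊆ K := by
      rintro x ⟨n, rfl⟩
      simp only [hK, Set.mem_setOf_eq]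
      have : (starRingEnd ℂ c) * (μ ^ n * c)
          = ((r ^ n : ℝ) : ℂ) * ((starRingEnd ℂ c) * c) := by
        rw [hr]; push_cast; ring
      rw [this]
      have hreal : ((starRingEnd ℂ c) * c) = ((Complex.normSq c : ℝ) : ℂ) := by
        rw [mul_comm, Complex.mul_conj]
      rw [hreal, ← Complex.ofReal_mul]
      exact Complex.ofReal_im _
    have hhull : convexHull ℝ (Set.range fun n : ℕ => μ ^ n * c) ⊆ K :=
      convexHull_min hsub hKconvex
    have hcl := hKclosed.closure_subset_iff.2 hhull
    have hx : (Complex.I * c) ∈ K := hcl (hdense _)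
    simp only [hK, Set.mem_setOf_eq] at hx
    have : (starRingEnd ℂ c) * (Complex.I * c) = Complex.I * ((Complex.normSq c : ℝ) : ℂ) := by
      rw [show (starRingEnd ℂ c) * (Complex.I * c) = Complex.I * ((starRingEnd ℂ c) * c) by ring,
        mul_comm (starRingEnd ℂ c) c, Complex.mul_conj]
    rw [this] at hx
    simp only [Complex.mul_im, Complex.I_re, Complex.I_im, Complex.ofReal_re,
      Complex.ofReal_im] at hx
    have : Complex.normSq c = 0 := by linarith [hx]
    exact hcne (Complex.normSq_eq_zero.1 this)
end
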